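/- Let κ > 0 and let z ∈ ℂ with Im z > 0. Then the Stieltjes transform of the semicircle measure μ_κ of radius κ, i.e. the probability measure on ℝ with density t ↦ (2/(πκ²))·√(max(κ² − t², 0)), satisfies ∫_ℝ (t − z)^{−1} dμ_κ(t) = (2/κ²)·(−z + √(z² − κ²)), where √(z² − κ²) denotes the value at z of the unique holomorphic square root of w ↦ w² − κ² on ℂ∖[−κ, κ] that is asymptotic to w as |w| → ∞. In particular μ_κ is a probability measure supported on [−κ, κ]. -/

import Mathlib

open MeasureTheory
open scoped ENNReal

noncomputable section

/-- The semicircle measure of radius `κ`: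
density `t ↦ (2/(πκ²))·√(max (κ² − t²) 0)` with respect to Lebesgue measure. -/
def semicircle (κ : ℝ) : Measure ℝ :=
  MeasureTheory.volume.withDensity fun t =>
    ENNReal.ofReal ((2 / (Real.pi * κ ^ 2)) * Real.sqrt (max (κ ^ 2 - t ^ 2) 0))

/-- The holomorphic square root of `z² − κ²` on `ℂ ∖ [−κ, κ]` asymptotic to `z` at
infinity, realized as `(z−κ)^{1/2}·(z+κ)^{1/2}` with principal branches. -/
def sqrtBr (κ : ℝ) (z : ℂ) : ℂ :=
  (z - (κ : ℂ)) ^ ((1 : ℂ) / 2) * (z + (κ : ℂ)) ^ ((1 : ℂ) / 2)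

open scoped Real

namespace Stmt18Aux

lemma quadrant {x : ℂ} (hx : 0 < x.im) :
    0 < (x ^ ((1 : ℂ) / 2)).re ∧ 0 < (x ^ ((1 : ℂ) / 2)).im := by
  have hx0 : x ≠ 0 := by
    intro h; rw [h] at hx; simp at hx
  have harg0 : 0 < x.arg := by
    rcases lt_or_eq_of_le ((Complex.arg_nonneg_iff).2 hx.le) with h | h
    · exact h
    · exact absurd ((Complex.arg_eq_zero_iff).1 h.symm).2 hx.ne'
  have hargpi : x.arg < π := by
    rcases lt_or_eq_of_le (Complex.arg_le_pi x) with h | h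
    · exact h
    · exact absurd ((Complex.arg_eq_pi_iff).1 h).2 hx.ne'
  rw [Complex.cpow_def_of_ne_zero hx0]
  have him : (Complex.log x * (1 / 2)).im = x.arg / 2 := by
    simp [Complex.mul_im, Complex.log_im]; ring
  refine ⟨?_, ?_⟩
  · rw [Complex.exp_re, him]
    have : 0 < Real.cos (x.arg / 2) :=
      Real.cos_pos_of_mem_Ioo ⟨by linarith [Real.pi_pos], by linarith⟩
    positivity
  · rw [Complex.exp_im, him]
    have : 0 < Real.sin (x.arg / 2) :=
      Real.sin_pos_of_pos_of_lt_pi (by linarith) (by linarith)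
    positivity

lemma S_im_pos {κ : ℝ} {z : ℂ} (hz : 0 < z.im) : 0 < (sqrtBr κ z).im := by
  have h1 : 0 < (z - (κ : ℂ)).im := by simpa using hz
  have h2 : 0 < (z + (κ : ℂ)).im := by simpa using hz
  obtain ⟨a1, a2⟩ := quadrant h1
  obtain ⟨b1, b2⟩ := quadrant h2
  rw [sqrtBr, Complex.mul_im]
  nlinarith

lemma S_sq {κ : ℝ} {z : ℂ} (hz : 0 < z.im) :
    (sqrtBr κ z) ^ 2 = z ^ 2 - (κ : ℂ) ^ 2 := by
  have h1 : z - (κ : ℂ) ≠ 0 := by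
    intro h
    have : (z - (κ : ℂ)).im = 0 := by rw [h]; simp
    simp at this; exact hz.ne' this
  have h2 : z + (κ : ℂ) ≠ 0 := by
    intro h
    have : (z + (κ : ℂ)).im = 0 := by rw [h]; simp
    simp at this; exact hz.ne' this
  have e1 : (z - (κ : ℂ)) ^ ((1:ℂ)/2) * (z - (κ : ℂ)) ^ ((1:ℂ)/2) = z - κ := by
    rw [← Complex.cpow_add _ _ h1]; norm_num
  have e2 : (z + (κ : ℂ)) ^ ((1:ℂ)/2) * (z + (κ : ℂ)) ^ ((1:ℂ)/2) = z + κ := by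
    rw [← Complex.cpow_add _ _ h2]; norm_num
  have : (sqrtBr κ z) ^ 2 = (z - κ) * (z + κ) := by
    rw [sqrtBr]; rw [mul_pow]
    rw [sq, sq, e1, e2]
  rw [this]; ring

/-- key positivity: the factor `(s+Q)b - (t-a)P` is positive -/
lemma E_pos {κ a b t s P Q : ℝ} (hb : 0 < b) (ht : -κ < t) (ht' : t < κ)
    (hs : 0 < s) (hQ : 0 < Q) (hPQ : P * Q = a * b)
    (hQP : Q ^ 2 - P ^ 2 = b ^ 2 + κ ^ 2 - a ^ 2) :
    0 < (s + Q) * b - (t - a) * P := by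
  have hκ : 0 < κ := by linarith
  have key : 0 < s * Q + Q ^ 2 + a ^ 2 - t * a := by
    nlinarith [sq_nonneg P, sq_nonneg (a - t), mul_pos hs hQ,
      mul_pos (by linarith : (0:ℝ) < κ - t) (by linarith : (0:ℝ) < κ + t), sq_nonneg b]
  have h2 : ((s + Q) * b - (t - a) * P) * Q = b * (s * Q + Q ^ 2 + a ^ 2 - t * a) := by
    linear_combination (a - t) * hPQ
  have h3 : 0 < ((s + Q) * b - (t - a) * P) * Q := by rw [h2]; exact mul_pos hb key
  by_contra h
  push_neg at h
  nlinarith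


set_option maxHeartbeats 2000000 in
lemma A_eq (κ : ℝ) (hκ : 0 < κ) (z : ℂ) (hz : 0 < z.im) :
    ∫ t in (-κ : ℝ)..κ, (Real.sqrt (κ ^ 2 - t ^ 2) : ℂ) * ((t : ℂ) - z)⁻¹
      = (π : ℝ) * (-z + sqrtBr κ z) := by
  set S : ℂ := sqrtBr κ z with hS
  have hSim : 0 < S.im := S_im_pos hz
  have hS2 : S ^ 2 = z ^ 2 - (κ : ℂ) ^ 2 := S_sq hz
  set R : ℂ := -Complex.I * S with hR
  have hR2 : R ^ 2 = (κ : ℂ) ^ 2 - z ^ 2 := by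
    rw [hR, mul_pow, neg_pow, Complex.I_sq, hS2]; ring
  have hRre : R.re = S.im := by simp [hR]
  have hRim : R.im = -S.re := by simp [hR]
  set s : ℝ → ℝ := fun t => Real.sqrt (κ ^ 2 - t ^ 2) with hs
  set N : ℝ → ℂ := fun t => (κ : ℂ) ^ 2 - z * t + R * (s t) with hN
  set D : ℝ → ℂ := fun t => (t : ℂ) - z with hD
  have hD0 : ∀ t : ℝ, D t ≠ 0 := by
    intro t h
    have : (D t).im = 0 := by rw [h]; simp
    simp [hD] at this
    exact hz.ne' this
  have him2 : S.re * S.im = z.re * z.im := by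
    have h := congrArg Complex.im hS2
    simp [pow_two, Complex.mul_im] at h
    linarith
  have hre2 : S.im ^ 2 - S.re ^ 2 = z.im ^ 2 + κ ^ 2 - z.re ^ 2 := by
    have h := congrArg Complex.re hS2
    simp [pow_two, Complex.mul_re] at h
    nlinarith [h]
  have hcross : ∀ t ∈ Set.Ioo (-κ) κ,
      0 < (N t).im * (D t).re - (N t).re * (D t).im := by
    intro t ht
    have ht2 : t ^ 2 < κ ^ 2 := by nlinarith [ht.1, ht.2]
    have hspos : 0 < s t := Real.sqrt_pos.2 (by nlinarith)
    have hs2 : s t ^ 2 = κ ^ 2 - t ^ 2 := Real.sq_sqrt (by nlinarith)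
    have hE := E_pos (κ := κ) (a := z.re) (b := z.im) (t := t) (s := s t)
      (P := S.re) (Q := S.im) hz ht.1 ht.2 hspos hSim him2 hre2
    have expr_eq : (N t).im * (D t).re - (N t).re * (D t).im
        = s t * ((s t + S.im) * z.im - (t - z.re) * S.re) := by
      simp [hN, hD, Complex.mul_im, Complex.mul_re, hRre, hRim, ← Complex.ofReal_pow]
      nlinarith [hs2]
    rw [expr_eq]
    exact mul_pos hspos hE
  have hN0 : ∀ t ∈ Set.Ioo (-κ) κ, N t ≠ 0 := by
    intro t ht h
    have := hcross t ht
    rw [h] at this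
    simp at this
  have hwim : ∀ t ∈ Set.Ioo (-κ) κ, 0 < (N t / D t).im := by
    intro t ht
    rw [Complex.div_im, div_sub_div_same]
    exact div_pos (hcross t ht) (Complex.normSq_pos.2 (hD0 t))
  have hslit : ∀ t ∈ Set.Ioo (-κ) κ,
      -Complex.I * (N t / D t) ∈ Complex.slitPlane := by
    intro t ht
    rw [Complex.mem_slitPlane_iff]
    left
    simpa using hwim t ht
  set Psi : ℝ → ℂ := fun t =>
    ((s t : ℝ) : ℂ) - z * ((Real.arcsin (t / κ) : ℝ) : ℂ)
      - R * Complex.log (-Complex.I * (N t / D t)) with hPsi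
  have hderiv : ∀ t ∈ Set.Ioo (-κ) κ,
      HasDerivAt Psi ((s t : ℂ) * (D t)⁻¹) t := by
    intro t ht
    have ht2 : t ^ 2 < κ ^ 2 := by nlinarith [ht.1, ht.2]
    have hspos : 0 < s t := Real.sqrt_pos.2 (by nlinarith)
    have hs2 : s t ^ 2 = κ ^ 2 - t ^ 2 := Real.sq_sqrt (by nlinarith)
    have hsne : ((s t : ℝ) : ℂ) ≠ 0 := by
      simpa using hspos.ne'
    have hs2C : ((s t : ℝ) : ℂ) * (s t : ℝ) = (κ : ℂ) ^ 2 - (t : ℂ) ^ 2 := by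
      have := congrArg (fun x : ℝ => (x : ℂ)) hs2
      push_cast at this
      rw [← this]; ring
    have hid : HasDerivAt (fun u : ℝ => ((u : ℝ) : ℂ)) 1 t := by
      simpa using (hasDerivAt_id t).ofReal_comp
    -- derivative of s
    have hsd : HasDerivAt s (-t / s t) t := by
      have h1 : HasDerivAt (fun u : ℝ => κ ^ 2 - u ^ 2) (-(2 * t)) t := by
        simpa using (hasDerivAt_pow 2 t).const_sub (κ ^ 2)
      have h2 := (Real.hasDerivAt_sqrt (by nlinarith : κ ^ 2 - t ^ 2 ≠ 0)).comp t h1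
      refine h2.congr_deriv (Eq.symm ?_)
      rw [hs]
      field_simp
    -- derivative of N
    have hNd : HasDerivAt N (-z + R * ((-t / s t : ℝ) : ℂ)) t := by
      have h1 : HasDerivAt (fun u : ℝ => z * ((u : ℝ) : ℂ)) z t := by
        simpa using hid.const_mul z
      have h2 : HasDerivAt (fun u : ℝ => R * ((s u : ℝ) : ℂ)) (R * ((-t / s t : ℝ) : ℂ)) t :=
        (hsd.ofReal_comp).const_mul R
      have h3 := ((hasDerivAt_const t ((κ : ℂ) ^ 2)).sub h1).add h2
      refine h3.congr_deriv (Eq.symm ?_)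
      ring
    have hDd : HasDerivAt D 1 t := by
      exact hid.sub_const z
    have hwd : HasDerivAt (fun u => N u / D u) _ t := hNd.div hDd (hD0 t)
    have hlogd := (hwd.const_mul (-Complex.I)).clog_real (by
      exact hslit t ht)
    -- derivative of arcsin (t/κ)
    have harc : HasDerivAt (fun u : ℝ => Real.arcsin (u / κ)) (1 / (s t)) t := by
      have hne1 : t / κ ≠ -1 := by
        intro h
        have : t = -κ := by field_simp at h; linarith
        exact absurd ht.1 (by rw [this]; simp)
      have hne2 : t / κ ≠ 1 := by
        intro h
        have : t = κ := by field_simp at h; exact h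
        exact absurd ht.2 (by rw [this]; simp)
      have h1 := (Real.hasDerivAt_arcsin hne1 hne2).comp t ((hasDerivAt_id t).div_const κ)
      have hsq : Real.sqrt (1 - (t / κ) ^ 2) = s t / κ := by
        rw [show 1 - (t / κ) ^ 2 = (s t / κ) ^ 2 by
          rw [div_pow, div_pow, hs2]; field_simp]
        exact Real.sqrt_sq (by positivity)
      refine h1.congr_deriv (Eq.symm ?_)
      rw [hsq]
      field_simp
    clear_value S R s N D Psi
    obtain ⟨A, hAdef⟩ : ∃ A : ℂ,
        A = (-z + R * ((-t / s t : ℝ) : ℂ)) * D t - N t * 1 := ⟨_, rfl⟩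
    rw [← hAdef] at hwd hlogd
    have hDt : ((t : ℂ)) - z ≠ 0 := by simpa [hD] using hD0 t
    have hA : ((s t : ℝ) : ℂ) * A = (-z * (s t : ℂ) - R * (t : ℂ)) * D t
        - (s t : ℂ) * N t := by
      rw [hAdef]
      push_cast
      field_simp
      ring
    have hlogd' : HasDerivAt (fun u => Complex.log (-Complex.I * (N u / D u)))
        (-R / (((s t : ℝ) : ℂ) * D t)) t := by
      convert hlogd using 1
      rw [mul_div_mul_left _ _ (neg_ne_zero.2 Complex.I_ne_zero)]
      have e2 : A / D t ^ 2 / (N t / D t) = A / (D t * N t) := by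
        field_simp [hD0 t, hN0 t ht]
      rw [e2, div_eq_div_iff (mul_ne_zero hsne (hD0 t))
        (mul_ne_zero (hD0 t) (hN0 t ht))]
      have hNt : N t = (κ : ℂ) ^ 2 - z * (t : ℂ) + R * ((s t : ℝ) : ℂ) := by
        rw [hN]
      have hDt' : D t = (t : ℂ) - z := by rw [hD]
      linear_combination (-(D t)) * hA + (D t * (((s t : ℝ) : ℂ) - R)) * hNt
        + ((D t) * R) * hs2C + (-(D t) * ((s t : ℝ) : ℂ)) * hR2
        + (D t * (R * (t : ℂ) + z * ((s t : ℝ) : ℂ))) * hDt'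
    have hd := ((hsd.ofReal_comp).sub ((harc.ofReal_comp).const_mul z)).sub
      (hlogd'.const_mul R)
    rw [hPsi]
    refine hd.congr_deriv (Eq.symm ?_)
    simp only [hD]
    push_cast
    field_simp
    linear_combination hs2C - hR2
  have hscont : Continuous s := by
    rw [hs]; exact (continuous_const.sub (continuous_pow 2)).sqrt
  have hNcont : Continuous N := by
    rw [hN]
    exact (continuous_const.sub (continuous_const.mul Complex.continuous_ofReal)).add
      (continuous_const.mul (Complex.continuous_ofReal.comp hscont))
  have hDcont : Continuous D := by
    rw [hD]; exact Complex.continuous_ofReal.sub continuous_const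
  have hsκ : s κ = 0 := by rw [hs]; simp
  have hsmκ : s (-κ) = 0 := by rw [hs]; simp
  have hNDκ : N κ / D κ = ((κ : ℝ) : ℂ) := by
    have h : N κ = ((κ : ℝ) : ℂ) * D κ := by simp only [hN, hD]; rw [hsκ]; push_cast; ring
    rw [h, mul_div_assoc, div_self (hD0 _), mul_one]
  have hNDmκ : N (-κ) / D (-κ) = ((-κ : ℝ) : ℂ) := by
    have h : N (-κ) = ((-κ : ℝ) : ℂ) * D (-κ) := by simp only [hN, hD]; rw [hsmκ]; push_cast; ring
    rw [h, mul_div_assoc, div_self (hD0 _), mul_one]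
  have hslitIcc : ∀ t ∈ Set.Icc (-κ) κ, -Complex.I * (N t / D t) ∈ Complex.slitPlane := by
    intro t ht
    rcases eq_or_lt_of_le ht.1 with h1 | h1
    · rw [← h1, hNDmκ, Complex.mem_slitPlane_iff]
      right
      simp [hκ.ne']
    · rcases eq_or_lt_of_le ht.2 with h2 | h2
      · rw [h2, hNDκ, Complex.mem_slitPlane_iff]
        right
        simp [hκ.ne']
      · exact hslit t ⟨h1, h2⟩
  have hPsicont : ContinuousOn Psi (Set.Icc (-κ) κ) := by
    rw [hPsi]
    refine ContinuousOn.sub (ContinuousOn.sub ?_ ?_) ?_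
    · exact (Complex.continuous_ofReal.comp hscont).continuousOn
    · exact (continuous_const.mul (Complex.continuous_ofReal.comp
        (Real.continuous_arcsin.comp (continuous_id.div_const κ)))).continuousOn
    · refine continuousOn_const.mul (ContinuousOn.clog ?_ hslitIcc)
      exact (continuous_const.mul (hNcont.div hDcont hD0)).continuousOn
  have hint : IntervalIntegrable (fun t => ((s t : ℝ) : ℂ) * (D t)⁻¹)
      MeasureTheory.volume (-κ) κ :=
    ((Complex.continuous_ofReal.comp hscont).mul (hDcont.inv₀ hD0)).intervalIntegrable _ _
  have hFTC := intervalIntegral.integral_eq_sub_of_hasDeriv_right_of_le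
    (by linarith : (-κ : ℝ) ≤ κ) hPsicont
    (fun x hx => (hderiv x hx).hasDerivWithinAt) hint
  have hgoal : ∫ t in (-κ : ℝ)..κ, (Real.sqrt (κ ^ 2 - t ^ 2) : ℂ) * ((t : ℂ) - z)⁻¹
      = Psi κ - Psi (-κ) := by
    rw [← hFTC]
  rw [hgoal, hPsi]
  simp only [hsκ, hsmκ, hNDκ, hNDmκ]
  have hlog1 : Complex.log (-Complex.I * ((κ : ℝ) : ℂ))
      = ((Real.log κ : ℝ) : ℂ) - ((π / 2 : ℝ) : ℂ) * Complex.I := by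
    apply Complex.ext
    · rw [Complex.log_re]
      simp [map_mul, Complex.norm_real, abs_of_pos hκ]
    · rw [Complex.log_im, mul_comm, Complex.arg_real_mul _ hκ, Complex.arg_neg_I]
      simp
  have hlog2 : Complex.log (-Complex.I * ((-κ : ℝ) : ℂ))
      = ((Real.log κ : ℝ) : ℂ) + ((π / 2 : ℝ) : ℂ) * Complex.I := by
    rw [show -Complex.I * ((-κ : ℝ) : ℂ) = ((κ : ℝ) : ℂ) * Complex.I by push_cast; ring]
    apply Complex.ext
    · rw [Complex.log_re]
      simp [map_mul, Complex.norm_real, abs_of_pos hκ]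
    · rw [Complex.log_im, Complex.arg_real_mul _ hκ, Complex.arg_I]
      simp
  rw [hlog1, hlog2, div_self hκ.ne', Real.arcsin_one,
    show (-κ) / κ = (-1 : ℝ) by field_simp, Real.arcsin_neg_one, hR]
  push_cast
  linear_combination (-(π : ℂ) * S) * Complex.I_sq

set_option maxHeartbeats 1000000 in
lemma area_eq (κ : ℝ) (hκ : 0 < κ) :
    ∫ t in (-κ : ℝ)..κ, Real.sqrt (κ ^ 2 - t ^ 2) = π * κ ^ 2 / 2 := by
  set s : ℝ → ℝ := fun t => Real.sqrt (κ ^ 2 - t ^ 2) with hs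
  set B : ℝ → ℝ := fun t => (t * s t + κ ^ 2 * Real.arcsin (t / κ)) / 2 with hB
  have hscont : Continuous s := by
    rw [hs]; exact (continuous_const.sub (continuous_pow 2)).sqrt
  have hBcont : ContinuousOn B (Set.Icc (-κ) κ) := by
    rw [hB]
    exact (((continuous_id.mul hscont).add (continuous_const.mul
      (Real.continuous_arcsin.comp (continuous_id.div_const κ)))).div_const 2).continuousOn
  have hderiv : ∀ t ∈ Set.Ioo (-κ) κ, HasDerivAt B (s t) t := by
    intro t ht
    have ht2 : t ^ 2 < κ ^ 2 := by nlinarith [ht.1, ht.2]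
    have hspos : 0 < s t := Real.sqrt_pos.2 (by nlinarith)
    have hs2 : s t ^ 2 = κ ^ 2 - t ^ 2 := Real.sq_sqrt (by nlinarith)
    have hsd : HasDerivAt s (-t / s t) t := by
      have h1 : HasDerivAt (fun u : ℝ => κ ^ 2 - u ^ 2) (-(2 * t)) t := by
        simpa using (hasDerivAt_pow 2 t).const_sub (κ ^ 2)
      have h2 := (Real.hasDerivAt_sqrt (by nlinarith : κ ^ 2 - t ^ 2 ≠ 0)).comp t h1
      refine h2.congr_deriv (Eq.symm ?_)
      rw [hs]
      field_simp
    have harc : HasDerivAt (fun u : ℝ => Real.arcsin (u / κ)) (1 / (s t)) t := by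
      have hne1 : t / κ ≠ -1 := by
        intro h
        have : t = -κ := by field_simp at h; linarith
        exact absurd ht.1 (by rw [this]; simp)
      have hne2 : t / κ ≠ 1 := by
        intro h
        have : t = κ := by field_simp at h; exact h
        exact absurd ht.2 (by rw [this]; simp)
      have h1 := (Real.hasDerivAt_arcsin hne1 hne2).comp t ((hasDerivAt_id t).div_const κ)
      have hsq : Real.sqrt (1 - (t / κ) ^ 2) = s t / κ := by
        rw [show 1 - (t / κ) ^ 2 = (s t / κ) ^ 2 by
          rw [div_pow, div_pow, hs2]; field_simp]
        exact Real.sqrt_sq (by positivity)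
      refine h1.congr_deriv (Eq.symm ?_)
      rw [hsq]
      field_simp
    have hd := (((hasDerivAt_id t).mul hsd).add (harc.const_mul (κ ^ 2))).div_const 2
    rw [hB]
    refine hd.congr_deriv (Eq.symm ?_)
    field_simp
    simp only [id_eq]
    linear_combination hs2
  have hint : IntervalIntegrable s MeasureTheory.volume (-κ) κ :=
    hscont.intervalIntegrable _ _
  have hFTC := intervalIntegral.integral_eq_sub_of_hasDeriv_right_of_le
    (by linarith : (-κ : ℝ) ≤ κ) hBcont
    (fun x hx => (hderiv x hx).hasDerivWithinAt) hint
  rw [hFTC, hB]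
  have h1 : s κ = 0 := by rw [hs]; simp
  have h2 : s (-κ) = 0 := by rw [hs]; simp
  simp only [h1, h2]
  rw [div_self hκ.ne', Real.arcsin_one, show (-κ) / κ = (-1 : ℝ) by field_simp,
    Real.arcsin_neg_one]
  ring

end Stmt18Aux

namespace Stmt18Aux
set_option maxHeartbeats 1000000 in
theorem main (κ : ℝ) (hκ : 0 < κ) (z : ℂ) (hz : 0 < z.im) :
    (∫ t, ((t : ℂ) - z)⁻¹ ∂(semicircle κ)) =
      (2 / (κ : ℂ) ^ 2) * (-z + sqrtBr κ z) ∧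
    IsProbabilityMeasure (semicircle κ) ∧
    semicircle κ (Set.Icc (-κ) κ)ᶜ = 0 := by
  have hπκ : (0 : ℝ) < Real.pi * κ ^ 2 := by positivity
  set c : ℝ := 2 / (Real.pi * κ ^ 2) with hc
  have hcpos : 0 < c := by positivity
  set g : ℝ → ℝ := fun t => c * Real.sqrt (max (κ ^ 2 - t ^ 2) 0) with hg
  have hgnn : ∀ t, 0 ≤ g t := fun t => by rw [hg]; positivity
  have hgcont : Continuous g := continuous_const.mul
    ((continuous_const.sub (continuous_pow 2)).max continuous_const).sqrt
  have hgzero : ∀ t ∉ Set.Icc (-κ) κ, g t = 0 := by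
    intro t ht
    simp only [Set.mem_Icc, not_and_or, not_le] at ht
    have h : κ ^ 2 - t ^ 2 ≤ 0 := by rcases ht with h | h <;> nlinarith
    rw [hg]
    simp [max_eq_right h]
  have hsemi : semicircle κ = MeasureTheory.volume.withDensity
      (fun t => ((g t).toNNReal : ℝ≥0∞)) := by
    rw [semicircle]
    congr 1
  have hmeas : Measurable fun t => (g t).toNNReal := hgcont.measurable.real_toNNReal
  have hgint : Integrable g := hgcont.integrable_of_hasCompactSupport
    (HasCompactSupport.intro isCompact_Icc hgzero)
  -- generic reduction of ∫ over ℝ to interval integral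
  have hred : ∀ (f : ℝ → ℂ), (∫ t : ℝ, g t • f t)
      = ∫ t in (-κ : ℝ)..κ, g t • f t := by
    intro f
    rw [← setIntegral_eq_integral_of_forall_compl_eq_zero
      (s := Set.Icc (-κ) κ) (fun t ht => by rw [hgzero t ht, zero_smul]),
      integral_Icc_eq_integral_Ioc, ← intervalIntegral.integral_of_le (by linarith)]
  -- part 1
  have part1 : (∫ t, ((t : ℂ) - z)⁻¹ ∂(semicircle κ)) =
      (2 / (κ : ℂ) ^ 2) * (-z + sqrtBr κ z) := by
    rw [hsemi, integral_withDensity_eq_integral_smul hmeas]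
    have e1 : (∫ t : ℝ, (g t).toNNReal • ((t : ℂ) - z)⁻¹)
        = ∫ t : ℝ, g t • ((t : ℂ) - z)⁻¹ := by
      congr 1
      funext t
      rw [NNReal.smul_def, Real.coe_toNNReal _ (hgnn t)]
    rw [e1, hred]
    have e2 : (∫ t in (-κ : ℝ)..κ, g t • ((t : ℂ) - z)⁻¹)
        = ∫ t in (-κ : ℝ)..κ, (c : ℂ) * ((Real.sqrt (κ ^ 2 - t ^ 2) : ℝ) * ((t : ℂ) - z)⁻¹) := by
      apply intervalIntegral.integral_congr
      intro x hx
      rw [Set.uIcc_of_le (by linarith : (-κ : ℝ) ≤ κ)] at hx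
      have hx2 : 0 ≤ κ ^ 2 - x ^ 2 := by
        obtain ⟨h1, h2⟩ := hx; nlinarith
      rw [hg]
      simp only [max_eq_left hx2, Complex.real_smul]
      push_cast
      ring
    rw [e2, intervalIntegral.integral_const_mul, A_eq κ hκ z hz]
    have hcC : (c : ℂ) * (Real.pi : ℂ) = 2 / (κ : ℂ) ^ 2 := by
      rw [hc]
      have hπ : ((Real.pi : ℝ) : ℂ) ≠ 0 := by
        exact_mod_cast Real.pi_ne_zero
      have hκC : ((κ : ℝ) : ℂ) ≠ 0 := by exact_mod_cast hκ.ne'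
      push_cast
      field_simp
    rw [show ((c : ℝ) : ℂ) * ((Real.pi : ℝ) * (-z + sqrtBr κ z))
        = ((c : ℝ) : ℂ) * (Real.pi : ℂ) * (-z + sqrtBr κ z) by ring, hcC]
  -- total mass
  have hmass : (∫ t : ℝ, g t) = 1 := by
    have := hred  -- reuse pattern for real-valued: redo for ℝ
    have hredR : (∫ t : ℝ, g t) = ∫ t in (-κ : ℝ)..κ, g t := by
      rw [← setIntegral_eq_integral_of_forall_compl_eq_zero
        (s := Set.Icc (-κ) κ) (fun t ht => hgzero t ht),
        integral_Icc_eq_integral_Ioc, ← intervalIntegral.integral_of_le (by linarith)]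
    rw [hredR]
    have e2 : (∫ t in (-κ : ℝ)..κ, g t)
        = ∫ t in (-κ : ℝ)..κ, c * Real.sqrt (κ ^ 2 - t ^ 2) := by
      apply intervalIntegral.integral_congr
      intro x hx
      rw [Set.uIcc_of_le (by linarith : (-κ : ℝ) ≤ κ)] at hx
      have hx2 : 0 ≤ κ ^ 2 - x ^ 2 := by
        obtain ⟨h1, h2⟩ := hx; nlinarith
      rw [hg]
      simp [max_eq_left hx2]
    rw [e2, intervalIntegral.integral_const_mul, area_eq κ hκ, hc]
    field_simp
  have part2 : IsProbabilityMeasure (semicircle κ) := by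
    constructor
    rw [hsemi, MeasureTheory.withDensity_apply _ MeasurableSet.univ,
      Measure.restrict_univ]
    have : ∀ t : ℝ, ((g t).toNNReal : ℝ≥0∞) = ENNReal.ofReal (g t) := fun t => rfl
    simp_rw [this]
    rw [← MeasureTheory.ofReal_integral_eq_lintegral_ofReal hgint
      (Filter.Eventually.of_forall hgnn), hmass]
    simp
  have part3 : semicircle κ (Set.Icc (-κ) κ)ᶜ = 0 := by
    rw [hsemi, MeasureTheory.withDensity_apply _ measurableSet_Icc.compl]
    rw [MeasureTheory.setLIntegral_congr_fun_ae measurableSet_Icc.compl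
      (Filter.Eventually.of_forall (fun t ht => by
        rw [hgzero t ht]; simp : ∀ t : ℝ, t ∈ (Set.Icc (-κ) κ)ᶜ →
          ((g t).toNNReal : ℝ≥0∞) = (fun _ => (0 : ℝ≥0∞)) t))]
    simp
  exact ⟨part1, part2, part3⟩


end Stmt18Aux

/-- the Stieltjes transform of the semicircle measure of radius `κ > 0`
is `(2/κ²)(−z + √(z²−κ²))` on the upper half-plane; moreover the semicircle measure is
a probability measure supported on `[−κ, κ]`. -/
theorem stmt18 (κ : ℝ) (hκ : 0 < κ) (z : ℂ) (hz : 0 < z.im) :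
    (∫ t, ((t : ℂ) - z)⁻¹ ∂(semicircle κ)) =
      (2 / (κ : ℂ) ^ 2) * (-z + sqrtBr κ z) ∧
    IsProbabilityMeasure (semicircle κ) ∧
    semicircle κ (Set.Icc (-κ) κ)ᶜ = 0 :=
  Stmt18Aux.main κ hκ z hz

end
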